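/- Let N ≥ 2, let {α, β} be a partition of {1,…,N} into nonempty sets, let A be a real N×N matrix with all row sums zero, and let C be an entrywise nonnegative real N×N matrix. Assume (A+C)_{αα} is invertible, (A+C)_{αα}^{-1} is entrywise positive, and (A+C)_{αα}^{-1} (A+C)_{αβ} is entrywise negative. Then for every F ∈ ℝ^α with F entrywise nonnegative and every u ∈ ℝ^N satisfying (A+C)_{αα} u_α + (A+C)_{αβ} u_β = F: (i) min_{i∈α} u_i ≥ −max_{j∈β} u_j⁻; and (ii) if u attains a nonpositive minimum over all of {1,…,N} at some index in α, then u is constant. -/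

import Mathlib

open Matrix Finset

/-- Submatrix of `A` with rows in `γ` and columns in `δ`. -/
def subm {N : ℕ} (A : Matrix (Fin N) (Fin N) ℝ) (γ δ : Finset (Fin N)) :
    Matrix ↥γ ↥δ ℝ :=
  A.submatrix Subtype.val Subtype.val

/-- Matrix form of the strong discrete maximum principle sDMP-B:
sufficiency of the sign conditions on `(A+C)_{αα}⁻¹` and `(A+C)_{αα}⁻¹ (A+C)_{αβ}`. -/
theorem sDMP_B_of_matrix_conditions {N : ℕ} (hN : 2 ≤ N)
    (α β : Finset (Fin N)) (hdisj : Disjoint α β) (hunion : α ∪ β = Finset.univ)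
    (hαne : α.Nonempty) (hβne : β.Nonempty)
    (A C : Matrix (Fin N) (Fin N) ℝ)
    (hrow : ∀ i, ∑ j, A i j = 0)
    (hC : ∀ i j, 0 ≤ C i j)
    (hinv : IsUnit (subm (A + C) α α))
    (hpos : ∀ p q, 0 < (subm (A + C) α α)⁻¹ p q)
    (hneg : ∀ p q, ((subm (A + C) α α)⁻¹ * subm (A + C) α β) p q < 0) :
    ∀ (F : ↥α → ℝ), (∀ p, 0 ≤ F p) →
      ∀ u : Fin N → ℝ,
        (subm (A + C) α α).mulVec (fun p => u p.val) +
          (subm (A + C) α β).mulVec (fun q => u q.val) = F →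
        (∀ i ∈ α, -(β.sup' hβne fun j => max (-(u j)) 0) ≤ u i) ∧
        ((∃ i ∈ α, u i ≤ 0 ∧ ∀ k, u i ≤ u k) → ∀ k l, u k = u l) := by
  intro F hF u hu
  set B : Matrix (Fin N) (Fin N) ℝ := A + C with hB
  set M : Matrix ↥α ↥α ℝ := subm B α α with hM
  set K : Matrix ↥α ↥β ℝ := subm B α β with hK
  have hdet : IsUnit M.det := (Matrix.isUnit_iff_isUnit_det M).mp hinv
  have hMinv : M⁻¹ * M = 1 := Matrix.nonsing_inv_mul M hdet
  -- split sums
  have hsplit : ∀ f : Fin N → ℝ, ∑ j, f j = (∑ q : ↥α, f q) + ∑ q : ↥β, f q := by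
    intro f
    rw [Finset.sum_coe_sort, Finset.sum_coe_sort, ← Finset.sum_union hdisj, hunion]
  -- nonneg row sums of B
  have hc : ∀ i, 0 ≤ ∑ j, B i j := by
    intro i
    have h1 : ∑ j, B i j = ∑ j, C i j := by
      simp only [hB, Matrix.add_apply, Finset.sum_add_distrib, hrow i, zero_add]
    rw [h1]
    exact Finset.sum_nonneg fun j _ => hC i j
  -- key identity: u_α = M⁻¹ F - (M⁻¹K) u_β
  have key : ∀ p : ↥α,
      u p = (M⁻¹.mulVec F) p - ∑ q : ↥β, (M⁻¹ * K) p q * u q := by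
    intro p
    have h1 : M⁻¹.mulVec F =
        (fun p : ↥α => u p) + (M⁻¹ * K).mulVec (fun q : ↥β => u q) := by
      rw [← hu, Matrix.mulVec_add, Matrix.mulVec_mulVec, Matrix.mulVec_mulVec,
        hMinv, Matrix.one_mulVec]
    have h2 := congrFun h1 p
    simp only [Pi.add_apply, Matrix.mulVec, dotProduct] at h2 ⊢
    linarith
  -- row sums of S = -(M⁻¹K) are ≤ 1
  have hS1 : ∀ p : ↥α, ∑ q : ↥β, -((M⁻¹ * K) p q) ≤ 1 := by
    intro p
    -- M 1 + K 1 = c where c ≥ 0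
    have hMK : ∀ r : ↥α, (∑ q : ↥α, M r q) + ∑ q : ↥β, K r q = ∑ j, B r.val j := by
      intro r
      rw [hsplit (fun j => B r.val j)]
      rfl
    -- apply M⁻¹
    have h0 : (0:ℝ) ≤ ∑ r : ↥α, M⁻¹ p r * (∑ j, B r.val j) :=
      Finset.sum_nonneg fun r _ => mul_nonneg (hpos p r).le (hc r)
    have h1 : ∑ r : ↥α, M⁻¹ p r * (∑ j, B r.val j)
        = (∑ r : ↥α, ∑ q : ↥α, M⁻¹ p r * M r q)
          + ∑ r : ↥α, ∑ q : ↥β, M⁻¹ p r * K r q := by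
      rw [← Finset.sum_add_distrib]
      congr 1; ext r
      rw [← hMK r, mul_add, Finset.mul_sum, Finset.mul_sum]
    have h2 : (∑ r : ↥α, ∑ q : ↥α, M⁻¹ p r * M r q) = 1 := by
      rw [Finset.sum_comm]
      have : ∀ q : ↥α, ∑ r : ↥α, M⁻¹ p r * M r q = (M⁻¹ * M) p q := fun q => rfl
      simp only [this, hMinv]
      simp [Finset.sum_ite_eq', Matrix.one_apply]
    have h3 : (∑ r : ↥α, ∑ q : ↥β, M⁻¹ p r * K r q) = ∑ q : ↥β, (M⁻¹ * K) p q := by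
      rw [Finset.sum_comm]
      rfl
    rw [h1, h2, h3] at h0
    have : ∑ q : ↥β, -((M⁻¹ * K) p q) = -∑ q : ↥β, (M⁻¹ * K) p q := by
      rw [Finset.sum_neg_distrib]
    linarith [this]
  -- M⁻¹ F ≥ 0
  have hMF : ∀ p : ↥α, 0 ≤ (M⁻¹.mulVec F) p := by
    intro p
    exact Finset.sum_nonneg fun q _ => mul_nonneg (hpos p q).le (hF q)
  -- the max quantity
  set m : ℝ := β.sup' hβne fun j => max (-(u j)) 0 with hm
  have hm0 : 0 ≤ m := by
    obtain ⟨j, hj⟩ := hβne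
    exact le_trans (le_max_right (-(u j)) 0)
      (Finset.le_sup' (fun j => max (-(u j)) 0) hj)
  have hmu : ∀ q : ↥β, -m ≤ u q := by
    intro q
    have h1 : -(u q.val) ≤ m := le_trans (le_max_left _ _)
      (Finset.le_sup' (fun j => max (-(u j)) 0) q.2)
    linarith
  -- Part (i)
  have part1 : ∀ i ∈ α, -m ≤ u i := by
    intro i hi
    set p : ↥α := ⟨i, hi⟩ with hp
    have hk := key p
    have hterm : ∀ q : ↥β, -((M⁻¹ * K) p q) * (-m) ≤ -((M⁻¹ * K) p q) * u q := by
      intro q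
      exact mul_le_mul_of_nonneg_left (hmu q) (by linarith [hneg p q])
    have hsum : ∑ q : ↥β, -((M⁻¹ * K) p q) * (-m)
        ≤ ∑ q : ↥β, -((M⁻¹ * K) p q) * u q :=
      Finset.sum_le_sum fun q _ => hterm q
    have hs : ∑ q : ↥β, -((M⁻¹ * K) p q) * (-m)
        = (∑ q : ↥β, -((M⁻¹ * K) p q)) * (-m) := by
      rw [Finset.sum_mul]
    have hss : -m ≤ (∑ q : ↥β, -((M⁻¹ * K) p q)) * (-m) := by
      have := mul_le_mul_of_nonpos_right (hS1 p) (by linarith : -m ≤ 0)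
      linarith
    have hse : ∑ q : ↥β, -((M⁻¹ * K) p q) * u q
        = -∑ q : ↥β, (M⁻¹ * K) p q * u q := by
      rw [← Finset.sum_neg_distrib]; congr 1; ext q; ring
    have := hMF p
    show -m ≤ u i
    rw [show u i = u p.val from rfl, hk]
    linarith [hsum, hs, hss, hse]
  refine ⟨part1, ?_⟩
  -- Part (ii)
  rintro ⟨i, hi, hle0, hmin⟩ k l
  set t : ℝ := u i with ht
  set p : ↥α := ⟨i, hi⟩ with hp
  -- step 1 : u = t on β
  have hβt : ∀ q : ↥β, u q = t := by
    have hk := key p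
    have hkt : t = (M⁻¹.mulVec F) p - ∑ q : ↥β, (M⁻¹ * K) p q * u q := hk
    set s : ℝ := ∑ q : ↥β, -((M⁻¹ * K) p q) with hs
    have hsum1 : ∑ q : ↥β, -((M⁻¹ * K) p q) * (u q - t)
        = (∑ q : ↥β, -((M⁻¹ * K) p q) * u q) - t * s := by
      rw [hs, Finset.mul_sum, ← Finset.sum_sub_distrib]
      exact Finset.sum_congr rfl fun q _ => by ring
    have hsum2 : ∑ q : ↥β, -((M⁻¹ * K) p q) * u q
        = -(∑ q : ↥β, (M⁻¹ * K) p q * u q) := by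
      rw [← Finset.sum_neg_distrib]
      exact Finset.sum_congr rfl fun q _ => by ring
    have heq : t * (1 - s) = (M⁻¹.mulVec F) p
        + ∑ q : ↥β, -((M⁻¹ * K) p q) * (u q - t) := by
      rw [hsum1, hsum2]; linarith [hkt]
    have hSnn : 0 ≤ ∑ q : ↥β, -((M⁻¹ * K) p q) * (u q - t) :=
      Finset.sum_nonneg fun q _ =>
        mul_nonneg (by linarith [hneg p q]) (by linarith [hmin q.val])
    have hlhs : t * (1 - s) ≤ 0 :=
      mul_nonpos_of_nonpos_of_nonneg hle0 (by linarith [hS1 p])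
    have hS0 : ∑ q : ↥β, -((M⁻¹ * K) p q) * (u q - t) = 0 := by
      linarith [hMF p]
    have hall := (Finset.sum_eq_zero_iff_of_nonneg (fun q _ =>
      mul_nonneg (by linarith [hneg p q] : (0:ℝ) ≤ -((M⁻¹ * K) p q))
        (by linarith [hmin q.val]))).mp hS0
    intro q
    have hq := hall q (Finset.mem_univ q)
    have hne : -((M⁻¹ * K) p q) ≠ 0 := by linarith [hneg p q]
    rcases mul_eq_zero.mp hq with h | h
    · exact absurd h hne
    · linarith
  -- step 2 : u = t on α via M w = g, w = M⁻¹ g ≥ 0, w p = 0 ⇒ g = 0 ⇒ w = 0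
  have hαt : ∀ r : ↥α, u r = t := by
    set w : ↥α → ℝ := fun r => u r - t with hw
    set g : ↥α → ℝ := fun r => F r - t * (∑ j, B r.val j) with hg
    have hgnn : ∀ r, 0 ≤ g r := by
      intro r
      have := mul_nonpos_of_nonpos_of_nonneg hle0 (hc r.val)
      have := hF r
      simp only [hg]; linarith
    have hMw : M.mulVec w = g := by
      funext r
      have hFr : F r = (∑ q : ↥α, M r q * u q) + ∑ q : ↥β, K r q * u q := by
        rw [← hu]; rfl
      have hcr : ∑ j, B r.val j = (∑ q : ↥α, M r q) + ∑ q : ↥β, K r q := by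
        rw [hsplit (fun j => B r.val j)]; rfl
      have hβs : ∑ q : ↥β, K r q * u q = t * ∑ q : ↥β, K r q := by
        rw [Finset.mul_sum]
        congr 1; ext q; rw [hβt q]; ring
      show ∑ q : ↥α, M r q * w q = g r
      simp only [hw, hg, hFr, hcr, hβs]
      rw [Finset.sum_congr rfl (fun q _ => by ring :
        ∀ q ∈ Finset.univ, M r q * (u q - t) = M r q * u q - t * M r q)]
      rw [Finset.sum_sub_distrib, ← Finset.mul_sum]
      ring
    have hwMg : w = M⁻¹.mulVec g := by
      rw [← hMw, Matrix.mulVec_mulVec, hMinv, Matrix.one_mulVec]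
    have hwp : w p = 0 := by simp [hw, hp, ht]
    have hg0 : ∀ q : ↥α, g q = 0 := by
      have h1 : ∑ q : ↥α, M⁻¹ p q * g q = 0 := by
        rw [← hwp, hwMg]; rfl
      have := (Finset.sum_eq_zero_iff_of_nonneg (fun q _ =>
        mul_nonneg (hpos p q).le (hgnn q))).mp h1
      intro q
      have hq := this q (Finset.mem_univ q)
      rcases mul_eq_zero.mp hq with h | h
      · exact absurd h (ne_of_gt (hpos p q))
      · exact h
    intro r
    have : w r = 0 := by
      rw [hwMg]
      show ∑ q : ↥α, M⁻¹ r q * g q = 0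
      exact Finset.sum_eq_zero fun q _ => by rw [hg0 q, mul_zero]
    simp only [hw] at this
    linarith
  -- conclude
  have hall : ∀ k : Fin N, u k = t := by
    intro k
    have : k ∈ α ∪ β := by rw [hunion]; exact Finset.mem_univ k
    rcases Finset.mem_union.mp this with h | h
    · exact hαt ⟨k, h⟩
    · exact hβt ⟨k, h⟩
  rw [hall k, hall l]
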